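/- Let N ≥ 2. The infimum of φ_1(ω) = ω_1 over the set A_1 = {ω ∈ Δ̃ : 1 ≤ (∑_{i=1}^{N} ω_i²)^{-1} < 2} equals 1/2, and it is attained at the barycenter b_{[2]} = (1/2, 1/2, 0, …, 0). -/

import Mathlib

open Finset Filter

/-- For `N ≥ 2`, the infimum of `φ_1(ω) = ω_1` over
`A_1 = {ω ∈ Δ̃ : 1 ≤ (∑ ω_i²)⁻¹ < 2}` equals `1/2`, and it is attained at the
barycenter `b_{[2]} = (1/2, 1/2, 0, …, 0)` (which lies in the closure of `A_1`
and on which `φ_1` takes the value `1/2`). -/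
theorem emp_inf_phi_one (N : ℕ) (hN : 2 ≤ N)
    (b2 : Fin N → ℝ) (hb2 : ∀ i, b2 i = if (i : ℕ) < 2 then 1 / 2 else 0) :
    sInf ((fun ω : Fin N → ℝ => ∑ i ∈ univ.filter (fun i : Fin N => (i : ℕ) < 1), ω i) ''
        {ω : Fin N → ℝ |
          (∀ i, 0 ≤ ω i) ∧ (∑ i, ω i = 1) ∧ (∀ i j : Fin N, i ≤ j → ω j ≤ ω i) ∧
          (1 : ℝ) ≤ (∑ i, ω i ^ 2)⁻¹ ∧ (∑ i, ω i ^ 2)⁻¹ < 2}) = 1 / 2 ∧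
    b2 ∈ closure {ω : Fin N → ℝ |
          (∀ i, 0 ≤ ω i) ∧ (∑ i, ω i = 1) ∧ (∀ i j : Fin N, i ≤ j → ω j ≤ ω i) ∧
          (1 : ℝ) ≤ (∑ i, ω i ^ 2)⁻¹ ∧ (∑ i, ω i ^ 2)⁻¹ < 2} ∧
    (∑ i ∈ univ.filter (fun i : Fin N => (i : ℕ) < 1), b2 i) = 1 / 2 := by
  have h0N : 0 < N := by omega
  have h1N : 1 < N := by omega
  set i0 : Fin N := ⟨0, h0N⟩ with hi0def
  set i1 : Fin N := ⟨1, h1N⟩ with hi1def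
  have hi01 : i0 ≠ i1 := by simp [hi0def, hi1def, Fin.ext_iff]
  have hfilt : univ.filter (fun i : Fin N => (i : ℕ) < 1) = {i0} := by
    ext i
    simp [Nat.lt_one_iff, Fin.ext_iff, hi0def]
  set S := {ω : Fin N → ℝ |
          (∀ i, 0 ≤ ω i) ∧ (∑ i, ω i = 1) ∧ (∀ i j : Fin N, i ≤ j → ω j ≤ ω i) ∧
          (1 : ℝ) ≤ (∑ i, ω i ^ 2)⁻¹ ∧ (∑ i, ω i ^ 2)⁻¹ < 2} with hSdef
  set φ : (Fin N → ℝ) → ℝ :=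
    fun ω : Fin N → ℝ => ∑ i ∈ univ.filter (fun i : Fin N => (i : ℕ) < 1), ω i with hφdef
  have hne01 : i1 ≠ i0 := fun h => hi01 h.symm
  haveI : NeZero N := ⟨by omega⟩
  have hφ : ∀ ω : Fin N → ℝ, φ ω = ω i0 := by
    intro ω
    simp only [hφdef]
    rw [hfilt, Finset.sum_singleton]
  -- the approximating family
  set w : ℝ → Fin N → ℝ :=
    fun t i => if i = i0 then 1/2 + t else if i = i1 then 1/2 - t else 0 with hwdef
  have hwsum : ∀ t : ℝ, ∑ i, w t i = 1 := by
    intro t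
    have : ∀ i : Fin N, w t i =
        (if i = i0 then 1/2 + t else 0) + (if i = i1 then 1/2 - t else 0) := by
      intro i
      by_cases h : i = i0
      · subst h; simp [hwdef, hi01]
      · by_cases h' : i = i1 <;> simp [hwdef, h, h', hne01]
    rw [Finset.sum_congr rfl fun i _ => this i, Finset.sum_add_distrib]
    simp [Finset.sum_ite_eq']
    norm_num
  have hwsq : ∀ t : ℝ, ∑ i, (w t i) ^ 2 = 1/2 + 2 * t ^ 2 := by
    intro t
    have : ∀ i : Fin N, (w t i) ^ 2 =
        (if i = i0 then (1/2 + t)^2 else 0) + (if i = i1 then (1/2 - t)^2 else 0) := by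
      intro i
      by_cases h : i = i0
      · subst h; simp [hwdef, hi01]
      · by_cases h' : i = i1 <;> simp [hwdef, h, h', hne01]
    rw [Finset.sum_congr rfl fun i _ => this i, Finset.sum_add_distrib]
    simp [Finset.sum_ite_eq']
    ring
  have hwmem : ∀ t : ℝ, 0 < t → t ≤ 1/2 → w t ∈ S := by
    intro t ht0 ht1
    have hnn : ∀ i, 0 ≤ w t i := by
      intro i
      by_cases h : i = i0
      · simp [hwdef, h]; linarith
      · by_cases h' : i = i1 <;> simp [hwdef, h, h', hne01] <;> linarith
    refine ⟨hnn, hwsum t, ?_, ?_, ?_⟩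
    · intro i j hij
      have hij' : (i : ℕ) ≤ (j : ℕ) := hij
      by_cases hj : j = i0
      · have : i = i0 := by
          have : (i : ℕ) = 0 := by
            have : (j : ℕ) = 0 := by simp [hj, hi0def]
            omega
          exact Fin.ext (by simpa [hi0def] using this)
        simp [this, hj]
      · by_cases hj' : j = i1
        · have hile : (i : ℕ) ≤ 1 := by
            have : (j : ℕ) = 1 := by simp [hj', hi1def]
            omega
          by_cases hi : i = i0
          · simp [hwdef, hi, hj', hi01, hne01]; linarith
          · have : i = i1 := by
              have h0 : (i : ℕ) ≠ 0 := fun h => hi (Fin.ext (by simpa [hi0def] using h))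
              exact Fin.ext (by simp [hi1def]; omega)
            simp [hwdef, this, hj', hne01]
        · have : w t j = 0 := by simp [hwdef, hj, hj']
          rw [this]; exact hnn i
    · rw [hwsq]
      have hs1 : (1:ℝ)/2 + 2 * t ^ 2 ≤ 1 := by nlinarith
      have hs0 : (0:ℝ) < 1/2 + 2 * t ^ 2 := by nlinarith
      rw [le_inv_comm₀ one_pos hs0]
      linarith
    · rw [hwsq]
      have hs0 : (1:ℝ)/2 < 1/2 + 2 * t ^ 2 := by nlinarith
      calc (1/2 + 2 * t ^ 2)⁻¹ < ((1:ℝ)/2)⁻¹ := by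
            apply inv_strictAnti₀ (by norm_num) hs0
        _ = 2 := by norm_num
  -- lower bound
  have hlb : ∀ ω ∈ S, (1:ℝ)/2 ≤ ω i0 := by
    intro ω hω
    obtain ⟨hnn, hsum, hmono, hinv1, hinv2⟩ := hω
    set s := ∑ i, ω i ^ 2 with hs
    have hs0 : 0 < s := by
      by_contra h
      push_neg at h
      have : s⁻¹ ≤ 0 := inv_nonpos.mpr h
      linarith
    have hs2 : (1:ℝ)/2 < s := by
      have h2 : s⁻¹ < 2 := hinv2
      nlinarith [mul_pos hs0 hs0, inv_mul_cancel₀ (ne_of_gt hs0)]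
    have hle : s ≤ ω i0 := by
      calc s = ∑ i, ω i ^ 2 := hs
        _ ≤ ∑ i, ω i0 * ω i := by
            apply Finset.sum_le_sum
            intro i _
            have h1 : ω i ≤ ω i0 := hmono i0 i (Fin.le_def.mpr (Nat.zero_le _))
            nlinarith [hnn i]
        _ = ω i0 := by rw [← Finset.mul_sum, hsum, mul_one]
    linarith
  have hlbφ : ∀ x ∈ φ '' S, (1:ℝ)/2 ≤ x := by
    rintro x ⟨ω, hω, rfl⟩
    rw [hφ]
    exact hlb ω hω
  have hbdd : BddBelow (φ '' S) := ⟨1/2, hlbφ⟩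
  have hne : (φ '' S).Nonempty := ⟨φ (w (1/2)), ⟨w (1/2), hwmem _ (by norm_num) le_rfl, rfl⟩⟩
  refine ⟨?_, ?_, ?_⟩
  · apply le_antisymm
    · apply le_of_forall_pos_le_add
      intro ε hε
      have htpos : 0 < min ε (1/2) := lt_min hε (by norm_num)
      have htle : min ε (1/2) ≤ 1/2 := min_le_right _ _
      have hmem : φ (w (min ε (1/2))) ∈ φ '' S :=
        ⟨w (min ε (1/2)), hwmem _ htpos htle, rfl⟩
      calc sInf (φ '' S) ≤ φ (w (min ε (1/2))) := csInf_le hbdd hmem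
        _ = 1/2 + min ε (1/2) := by rw [hφ]; simp [hwdef]
        _ ≤ 1/2 + ε := by linarith [min_le_left ε (1/2:ℝ)]
    · exact le_csInf hne hlbφ
  · -- closure
    have hb2w : Tendsto (fun n : ℕ => w (1/(n+2))) atTop (nhds b2) := by
      rw [tendsto_pi_nhds]
      intro i
      have htend : Tendsto (fun n : ℕ => (1:ℝ)/(n+2)) atTop (nhds 0) := by
        have h1 := tendsto_one_div_add_atTop_nhds_zero_nat (𝕜 := ℝ)
        have h2 : Tendsto (fun n : ℕ => n + 1) atTop atTop := tendsto_add_atTop_nat 1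
        refine Tendsto.congr (fun n => ?_) (h1.comp h2)
        simp [Function.comp]
        push_cast
        ring
      by_cases h : i = i0
      · subst h
        have hb : b2 i0 = 1/2 := by rw [hb2]; simp [hi0def]
        rw [hb]
        simp only [hwdef, if_pos rfl]
        have : Tendsto (fun n : ℕ => 1/2 + (1:ℝ)/(n+2)) atTop (nhds (1/2 + 0)) :=
          tendsto_const_nhds.add htend
        simpa using this
      · by_cases h' : i = i1
        · subst h'
          have hb : b2 i1 = 1/2 := by rw [hb2]; simp [hi1def]
          rw [hb]
          simp only [hwdef, if_neg hne01, if_pos rfl]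
          have : Tendsto (fun n : ℕ => 1/2 - (1:ℝ)/(n+2)) atTop (nhds (1/2 - 0)) :=
            tendsto_const_nhds.sub htend
          simpa using this
        · have hb : b2 i = 0 := by
            rw [hb2]
            have h0 : (i : ℕ) ≠ 0 := fun hh => h (Fin.ext (by simpa [hi0def] using hh))
            have h1 : (i : ℕ) ≠ 1 := fun hh => h' (Fin.ext (by simpa [hi1def] using hh))
            have : ¬ (i : ℕ) < 2 := by omega
            simp [this]
          simp only [hwdef, if_neg h, if_neg h', hb]
          exact tendsto_const_nhds
    apply mem_closure_of_tendsto hb2w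
    filter_upwards with n
    apply hwmem
    · positivity
    · rw [div_le_div_iff₀ (by positivity) (by norm_num)]
      have : (0:ℝ) ≤ (n:ℝ) := Nat.cast_nonneg n
      linarith
  · rw [hfilt, Finset.sum_singleton, hb2]
    simp [hi0def]
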